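/- Assume the cocycle c is real, i.e. ⟨c(S(y*)), c((S(x))*)⟩ = ⟨c(x), c(y)⟩ for all x, y ∈ A. Then the functional ψ is hermitian: for every x ∈ A and all finite families (yᵢ)ᵢ, (zᵢ)ᵢ with Δx = Σᵢ yᵢ ⊗ zᵢ and (pⱼ)ⱼ, (qⱼ)ⱼ with Δ(x*) = Σⱼ pⱼ ⊗ qⱼ, one has Σⱼ ⟨c(pⱼ), c(S(qⱼ*))⟩ = conjugate of Σᵢ ⟨c(yᵢ), c(S(zᵢ*))⟩; that is, ψ(x*) = conj(ψ(x)) where ψ(x) = Σᵢ ⟨c(yᵢ), c(S(zᵢ*))⟩ whenever Δx = Σᵢ yᵢ ⊗ zᵢ. -/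

import Mathlib

set_option linter.unusedSectionVars false
open scoped TensorProduct InnerProductSpace ComplexConjugate
open HopfAlgebra

section Aux

variable {A : Type*} [Ring A] [HopfAlgebra ℂ A] [StarRing A] [StarModule ℂ A]
  {H : Type*} [NormedAddCommGroup H] [InnerProductSpace ℂ H] [CompleteSpace H]

/-- The bilinear functional `a ⊗ b ↦ ⟪c(S(b*)), c(a)⟫`. -/
noncomputable def auxF2 (c : A →ₗ[ℂ] H) : A →ₗ[ℂ] A →ₗ[ℂ] ℂ :=
  LinearMap.mk₂ ℂ (fun a b => ⟪c (antipode (R := ℂ) (star b)), c a⟫_ℂ)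
    (fun a a' b => by simp [inner_add_right])
    (fun r a b => by simp [inner_smul_right])
    (fun a b b' => by simp [star_add, inner_add_left])
    (fun r a b => by simp [star_smul, inner_smul_left, mul_comm])

noncomputable def auxPhi2 (c : A →ₗ[ℂ] H) : A ⊗[ℂ] A →ₗ[ℂ] ℂ :=
  TensorProduct.lift (auxF2 c)

@[simp] lemma auxPhi2_tmul (c : A →ₗ[ℂ] H) (a b : A) :
    auxPhi2 c (a ⊗ₜ[ℂ] b) = ⟪c (antipode (R := ℂ) (star b)), c a⟫_ℂ := rfl

/-- The trilinear functional `a ⊗ b ⊗ d ↦ ⟪c(a*), π(S b)(c d)⟫`. -/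
noncomputable def auxF3 (π : A →⋆ₐ[ℂ] (H →L[ℂ] H)) (c : A →ₗ[ℂ] H) :
    A →ₗ[ℂ] A →ₗ[ℂ] A →ₗ[ℂ] ℂ :=
  LinearMap.mk₂ ℂ (fun a b =>
      (innerₛₗ ℂ (c (star a))) ∘ₗ ((π (antipode (R := ℂ) b) : H →L[ℂ] H) : H →ₗ[ℂ] H) ∘ₗ c)
    (fun a a' b => by ext d; simp [star_add, inner_add_left])
    (fun r a b => by ext d; simp [star_smul, inner_smul_left])
    (fun a b b' => by ext d; simp [map_add, inner_add_right])
    (fun r a b => by ext d; simp [map_smul, inner_smul_right])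

@[simp] lemma auxF3_apply (π : A →⋆ₐ[ℂ] (H →L[ℂ] H)) (c : A →ₗ[ℂ] H) (a b d : A) :
    auxF3 π c a b d = ⟪c (star a), π (antipode (R := ℂ) b) (c d)⟫_ℂ := rfl

noncomputable def auxPhi3 (π : A →⋆ₐ[ℂ] (H →L[ℂ] H)) (c : A →ₗ[ℂ] H) :
    A ⊗[ℂ] (A ⊗[ℂ] A) →ₗ[ℂ] ℂ :=
  TensorProduct.lift ((TensorProduct.lift.equiv (RingHom.id ℂ) A A ℂ).toLinearMap ∘ₗ auxF3 π c)

@[simp] lemma auxPhi3_tmul (π : A →⋆ₐ[ℂ] (H →L[ℂ] H)) (c : A →ₗ[ℂ] H) (a b d : A) :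
    auxPhi3 π c (a ⊗ₜ[ℂ] (b ⊗ₜ[ℂ] d)) = ⟪c (star a), π (antipode (R := ℂ) b) (c d)⟫_ℂ := rfl

/-- `(id ⊗ ε) ∘ Δ = id` in scalar form: `∑ ε(b_j) • a_j = a`. -/
lemma repr_sum_counit_right_smul {ι : Type*} {a : A} (r : Coalgebra.Repr ℂ a ι) :
    ∑ j ∈ r.index, Coalgebra.counit (R := ℂ) (r.right j) • r.left j = a := by
  have h2 := congrArg (TensorProduct.rid ℂ A) (Coalgebra.sum_tmul_counit_eq r)
  simp only [map_sum, TensorProduct.rid_tmul, one_smul] at h2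
  exact h2

/-- `(ε ⊗ id) ∘ Δ = id` in scalar form: `∑ ε(a_j) • b_j = a`. -/
lemma repr_sum_counit_left_smul {ι : Type*} {a : A} (r : Coalgebra.Repr ℂ a ι) :
    ∑ j ∈ r.index, Coalgebra.counit (R := ℂ) (r.left j) • r.right j = a := by
  have h2 := congrArg (TensorProduct.lid ℂ A) (Coalgebra.sum_counit_tmul_eq r)
  simp only [map_sum, TensorProduct.lid_tmul, one_smul] at h2
  exact h2

end Aux

-- The paper's inner product `⟨u, v⟩` is linear in `u`; it equals Mathlib's `⟪v, u⟫_ℂ`.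
theorem real_cocycle_generator_hermitian
    {A : Type*} [Ring A] [HopfAlgebra ℂ A]
    [StarRing A] [StarModule ℂ A]
    -- `A` is a Hopf *-algebra:
    (hΔstar : ∀ (x : A) (m : ℕ) (y z : Fin m → A),
      Coalgebra.comul (R := ℂ) x = ∑ i, y i ⊗ₜ[ℂ] z i →
      Coalgebra.comul (R := ℂ) (star x) = ∑ i, star (y i) ⊗ₜ[ℂ] star (z i))
    (hεstar : ∀ x : A,
      Coalgebra.counit (R := ℂ) (star x) = starRingEnd ℂ (Coalgebra.counit (R := ℂ) x))
    (hSstar : ∀ x : A, antipode (R := ℂ) (star (antipode (R := ℂ) (star x))) = x)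
    {H : Type*} [NormedAddCommGroup H] [InnerProductSpace ℂ H] [CompleteSpace H]
    (π : A →⋆ₐ[ℂ] (H →L[ℂ] H))
    (c : A →ₗ[ℂ] H)
    (hc : ∀ x y : A, c (x * y) = π x (c y) + Coalgebra.counit (R := ℂ) y • c x)
    -- `c` is a real cocycle: `⟨c(S(y*)), c((Sx)*)⟩ = ⟨c(x), c(y)⟩` for all `x, y ∈ A`
    (hreal : ∀ x y : A,
      ⟪c (star (antipode (R := ℂ) x)), c (antipode (R := ℂ) (star y))⟫_ℂ = ⟪c y, c x⟫_ℂ) :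
    ∀ (x : A) (m : ℕ) (y z : Fin m → A) (m' : ℕ) (p q : Fin m' → A),
      Coalgebra.comul (R := ℂ) x = ∑ i, y i ⊗ₜ[ℂ] z i →
      Coalgebra.comul (R := ℂ) (star x) = ∑ j, p j ⊗ₜ[ℂ] q j →
      ∑ j, ⟪c (antipode (R := ℂ) (star (q j))), c (p j)⟫_ℂ =
        conj (∑ i, ⟪c (antipode (R := ℂ) (star (z i))), c (y i)⟫_ℂ) := by
  intro x m y z m' p q hx hx'
  -- basic facts
  have hc1 : c 1 = 0 := by
    have h := hc 1 1
    simp only [mul_one, Bialgebra.counit_one, one_smul, map_one,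
      ContinuousLinearMap.one_apply] at h
    have := h.symm
    -- c 1 = c 1 + c 1
    rw [right_eq_add] at h
    exact h
  have hSS : ∀ a : A, star (antipode (R := ℂ) (star (antipode (R := ℂ) a))) = a := by
    intro a
    have h := hSstar (star a)
    rw [star_star] at h
    calc star (antipode (R := ℂ) (star (antipode (R := ℂ) a))) = star (star a) := by rw [h]
      _ = a := star_star a
  have hadj : ∀ (w : A) (u v : H), ⟪u, π w v⟫_ℂ = ⟪π (star w) u, v⟫_ℂ := by
    intro w u v
    rw [map_star, ContinuousLinearMap.star_eq_adjoint, ContinuousLinearMap.adjoint_inner_left]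
  -- representations
  let rx : Coalgebra.Repr ℂ x (Fin m) := ⟨Finset.univ, y, z, hx.symm⟩
  let ry : ∀ i : Fin m, Coalgebra.Repr ℂ (y i) (A × A) := fun i => Coalgebra.Repr.arbitrary ℂ (y i)
  let rz : ∀ i : Fin m, Coalgebra.Repr ℂ (z i) (A × A) := fun i => Coalgebra.Repr.arbitrary ℂ (z i)
  -- coassociativity
  have hco := Coalgebra.sum_tmul_tmul_eq rx ry rz
  have E := congrArg (auxPhi3 π c) hco
  simp only [map_sum, auxPhi3_tmul] at E
  -- step A : evaluate the ( id ⊗ Δ ) side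
  have stepA : ∀ i : Fin m,
      ∑ j ∈ (rz i).index, ⟪c (star (rx.left i)),
        π (antipode (R := ℂ) ((rz i).left j)) (c ((rz i).right j))⟫_ℂ
      = -⟪c (star (y i)), c (antipode (R := ℂ) (z i))⟫_ℂ := by
    intro i
    have hsum : ∑ j ∈ (rz i).index,
        π (antipode (R := ℂ) ((rz i).left j)) (c ((rz i).right j))
        = -c (antipode (R := ℂ) (z i)) := by
      have e1 : ∀ j, π (antipode (R := ℂ) ((rz i).left j)) (c ((rz i).right j))
          = c (antipode (R := ℂ) ((rz i).left j) * (rz i).right j)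
            - Coalgebra.counit (R := ℂ) ((rz i).right j) •
              c (antipode (R := ℂ) ((rz i).left j)) := by
        intro j
        rw [hc]
        abel
      rw [Finset.sum_congr rfl (fun j _ => e1 j), Finset.sum_sub_distrib]
      have h1 : ∑ j ∈ (rz i).index,
          c (antipode (R := ℂ) ((rz i).left j) * (rz i).right j) = 0 := by
        rw [← map_sum, sum_antipode_mul_eq_smul (rz i), map_smul, hc1, smul_zero]
      have h2 : ∑ j ∈ (rz i).index,
          Coalgebra.counit (R := ℂ) ((rz i).right j) •
            c (antipode (R := ℂ) ((rz i).left j))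
          = c (antipode (R := ℂ) (z i)) := by
        calc ∑ j ∈ (rz i).index, Coalgebra.counit (R := ℂ) ((rz i).right j) •
              c (antipode (R := ℂ) ((rz i).left j))
            = c (antipode (R := ℂ) (∑ j ∈ (rz i).index,
                Coalgebra.counit (R := ℂ) ((rz i).right j) • (rz i).left j)) := by
              simp [map_sum, map_smul]
          _ = c (antipode (R := ℂ) (z i)) := by rw [repr_sum_counit_right_smul (rz i)]
      rw [h1, h2, zero_sub]
    calc ∑ j ∈ (rz i).index, ⟪c (star (rx.left i)),
          π (antipode (R := ℂ) ((rz i).left j)) (c ((rz i).right j))⟫_ℂ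
        = ⟪c (star (y i)), ∑ j ∈ (rz i).index,
            π (antipode (R := ℂ) ((rz i).left j)) (c ((rz i).right j))⟫_ℂ := by
          rw [inner_sum]
      _ = -⟪c (star (y i)), c (antipode (R := ℂ) (z i))⟫_ℂ := by rw [hsum, inner_neg_right]
  -- step B : evaluate the ( Δ ⊗ id ) side
  have stepB : ∀ i : Fin m,
      ∑ j ∈ (ry i).index, ⟪c (star ((ry i).left j)),
        π (antipode (R := ℂ) ((ry i).right j)) (c (rx.right i))⟫_ℂ
      = -⟪c (star (antipode (R := ℂ) (y i))), c (z i)⟫_ℂ := by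
    intro i
    have e1 : ∀ j ∈ (ry i).index, ⟪c (star ((ry i).left j)),
        π (antipode (R := ℂ) ((ry i).right j)) (c (rx.right i))⟫_ℂ
        = ⟪c (star ((ry i).left j * antipode (R := ℂ) ((ry i).right j))), c (z i)⟫_ℂ
          - Coalgebra.counit (R := ℂ) ((ry i).left j) *
            ⟪c (star (antipode (R := ℂ) ((ry i).right j))), c (z i)⟫_ℂ := by
      intro j _
      rw [hadj]
      have h2 : π (star (antipode (R := ℂ) ((ry i).right j))) (c (star ((ry i).left j)))
          = c (star ((ry i).left j * antipode (R := ℂ) ((ry i).right j)))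
            - Coalgebra.counit (R := ℂ) (star ((ry i).left j)) •
              c (star (antipode (R := ℂ) ((ry i).right j))) := by
        rw [star_mul]
        rw [hc]
        abel
      rw [h2, inner_sub_left, inner_smul_left, hεstar, RingHomCompTriple.comp_apply]
      simp
      rfl
    rw [Finset.sum_congr rfl e1, Finset.sum_sub_distrib]
    have h1 : ∑ j ∈ (ry i).index,
        ⟪c (star ((ry i).left j * antipode (R := ℂ) ((ry i).right j))), c (z i)⟫_ℂ = 0 := by
      rw [← sum_inner]
      have : ∑ j ∈ (ry i).index,
          c (star ((ry i).left j * antipode (R := ℂ) ((ry i).right j))) = 0 := by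
        have : (∑ j ∈ (ry i).index,
            (ry i).left j * antipode (R := ℂ) ((ry i).right j)) =
            Coalgebra.counit (R := ℂ) (y i) • (1 : A) := sum_mul_antipode_eq_smul (ry i)
        calc ∑ j ∈ (ry i).index,
              c (star ((ry i).left j * antipode (R := ℂ) ((ry i).right j)))
            = c (star (∑ j ∈ (ry i).index,
                (ry i).left j * antipode (R := ℂ) ((ry i).right j))) := by
              rw [star_sum, map_sum]
          _ = c (star (Coalgebra.counit (R := ℂ) (y i) • (1 : A))) := by rw [this]
          _ = 0 := by rw [star_smul, star_one, map_smul, hc1, smul_zero]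
      rw [this, inner_zero_left]
    have h2 : ∑ j ∈ (ry i).index, Coalgebra.counit (R := ℂ) ((ry i).left j) *
        ⟪c (star (antipode (R := ℂ) ((ry i).right j))), c (z i)⟫_ℂ
        = ⟪c (star (antipode (R := ℂ) (y i))), c (z i)⟫_ℂ := by
      have e2 : ∀ j ∈ (ry i).index, Coalgebra.counit (R := ℂ) ((ry i).left j) *
          ⟪c (star (antipode (R := ℂ) ((ry i).right j))), c (z i)⟫_ℂ
          = ⟪c (star (antipode (R := ℂ)
              (Coalgebra.counit (R := ℂ) ((ry i).left j) • (ry i).right j))), c (z i)⟫_ℂ := by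
        intro j _
        rw [map_smul, star_smul, map_smul, inner_smul_left]
        simp
      rw [Finset.sum_congr rfl e2, ← sum_inner, ← map_sum, ← star_sum, ← map_sum,
        repr_sum_counit_left_smul (ry i)]
    rw [h1, h2, zero_sub]
  rw [Finset.sum_congr rfl (fun i _ => stepB i), Finset.sum_congr rfl (fun i _ => stepA i)] at E
  simp only [Finset.sum_neg_distrib, neg_inj] at E
  -- key identity (†)
  have dagger : ∑ i, ⟪c (star (antipode (R := ℂ) (y i))), c (z i)⟫_ℂ
      = ∑ i, ⟪c (star (y i)), c (antipode (R := ℂ) (z i))⟫_ℂ := E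
  -- compute the left side of the goal via well-definedness
  have hΔx' := hΔstar x m y z hx
  have hpq : (∑ j, p j ⊗ₜ[ℂ] q j) = ∑ i, star (y i) ⊗ₜ[ℂ] star (z i) :=
    hx'.symm.trans hΔx'
  have hL := congrArg (auxPhi2 c) hpq
  simp only [map_sum, auxPhi2_tmul, star_star] at hL
  -- hL : ∑ j, ⟪c (S (star (q j))), c (p j)⟫ = ∑ i, ⟪c (S (z i)), c (star (y i))⟫
  rw [hL]
  -- rewrite the conjugated right side
  simp only [map_sum]
  have hR : ∀ i : Fin m, conj ⟪c (antipode (R := ℂ) (star (z i))), c (y i)⟫_ℂ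
      = ⟪c (z i), c (star (antipode (R := ℂ) (y i)))⟫_ℂ := by
    intro i
    rw [inner_conj_symm]
    have h := hreal (star (antipode (R := ℂ) (y i))) (z i)
    rw [hSS] at h
    exact h
  rw [Finset.sum_congr rfl (fun i _ => hR i)]
  -- now: ∑ ⟪c (S z), c (y*)⟫ = ∑ ⟪c z, c ((S y)*)⟫
  calc ∑ i, ⟪c (antipode (R := ℂ) (z i)), c (star (y i))⟫_ℂ
      = conj (∑ i, ⟪c (star (y i)), c (antipode (R := ℂ) (z i))⟫_ℂ) := by
        simp only [map_sum]; exact Finset.sum_congr rfl fun i _ => (inner_conj_symm _ _).symm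
    _ = conj (∑ i, ⟪c (star (antipode (R := ℂ) (y i))), c (z i)⟫_ℂ) := by rw [dagger]
    _ = ∑ i, ⟪c (z i), c (star (antipode (R := ℂ) (y i)))⟫_ℂ := by
        simp only [map_sum]; exact Finset.sum_congr rfl fun i _ => inner_conj_symm _ _
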